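/- Let G be an r-graph, let P be a partition of the edge set of G, and let A, B ⊆ ℕ. Let M' be the smallest family of subgraphs of G that contains every member of P and contains F ∪ H whenever F, H ∈ M' are edge-disjoint and A⋈B-mergeable. Assume that whenever F, H ∈ M' are A⟨B-mergeable, there exist F', H' ∈ P with F' ⊆ F and H' ⊆ H such that F' and H' are A⟨B-mergeable. Then for all F₀, F ∈ M' with F₀ ⊆ F there is an ordering F_1, …, F_s of the members of P that are contained in F and edge-disjoint from F₀ such that, for every i ∈ [s], the subgraphs F₀ ∪ F_1 ∪ … ∪ F_{i-1} and F_i are A⋈B-mergeable. -/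

import Mathlib

open Finset Filter

/-- `G` is an `r`-graph: a finite set of edges, each edge a finite set of exactly `r` vertices. -/
def IsRGraph {V : Type*} (r : ℕ) (G : Finset (Finset V)) : Prop :=
  ∀ e ∈ G, e.card = r

/-- `G` contains an `(s,k)`-configuration: `k` distinct edges spanning at most `s` vertices. -/
def HasConfig {V : Type*} [DecidableEq V] (s k : ℕ) (G : Finset (Finset V)) : Prop :=
  ∃ S ⊆ G, S.card = k ∧ (S.biUnion id).card ≤ s

/-- `G` is `(s,k)`-free. -/
def ConfigFree {V : Type*} [DecidableEq V] (s k : ℕ) (G : Finset (Finset V)) : Prop :=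
  ¬ HasConfig s k G

/-- An `r`-graph `F` `i`-claims the pair `{x,y}` if there are `i` distinct edges
`X_1, …, X_i` of `F` with `|{x,y} ∪ X_1 ∪ … ∪ X_i| ≤ ri - 2i + 2`.
(For `i = 0` this holds trivially, matching the convention that every `r`-graph
`0`-claims every pair.) -/
def Claims {V : Type*} [DecidableEq V] (r i : ℕ) (F : Finset (Finset V)) (x y : V) : Prop :=
  ∃ S ⊆ F, S.card = i ∧ (insert x (insert y (S.biUnion id))).card ≤ r * i - 2 * i + 2

/-- `CSet r F u v` is the set `C_F(uv)` of all `i ≥ 0` such that `F` `i`-claims `{u,v}`. -/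
def CSet {V : Type*} [DecidableEq V] (r : ℕ) (F : Finset (Finset V)) (u v : V) : Set ℕ :=
  {i | Claims r i F u v}

/-- `P_{≤t}(F)`: the set of pairs `{x,y}` of vertices of `F` that are `i`-claimed by `F`
for some `1 ≤ i ≤ t`. -/
def PLE {V : Type*} [DecidableEq V] (r t : ℕ) (F : Finset (Finset V)) : Set (Finset V) :=
  {p | ∃ x y : V, x ≠ y ∧ p = {x, y} ∧ x ∈ F.biUnion id ∧ y ∈ F.biUnion id ∧
    ∃ i, 1 ≤ i ∧ i ≤ t ∧ Claims r i F x y}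

/-- `P_1(F)`: the set of pairs of distinct vertices contained together in some edge of `F`. -/
def P1 {V : Type*} [DecidableEq V] (F : Finset (Finset V)) : Set (Finset V) :=
  {p | ∃ x y : V, x ≠ y ∧ p = {x, y} ∧ ∃ e ∈ F, x ∈ e ∧ y ∈ e}

/-- Edge-disjoint subgraphs `F` and `H` are `A⟨B`-mergeable if there is a pair `{u,v}` of
distinct vertices with `A ⊆ C_F(uv)` and `B ⊆ C_H(uv)`. -/
def OMergeable {V : Type*} [DecidableEq V] (r : ℕ) (A B : Set ℕ)
    (F H : Finset (Finset V)) : Prop :=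
  Disjoint F H ∧ ∃ u v : V, u ≠ v ∧ A ⊆ CSet r F u v ∧ B ⊆ CSet r H u v

/-- `F` and `H` are `A⋈B`-mergeable if `F,H` or `H,F` are `A⟨B`-mergeable. -/
def Mergeable {V : Type*} [DecidableEq V] (r : ℕ) (A B : Set ℕ)
    (F H : Finset (Finset V)) : Prop :=
  OMergeable r A B F H ∨ OMergeable r A B H F

/-! ### Auxiliary lemmas for the Trimming Lemma -/

lemma tl_cset_mono {V : Type*} [DecidableEq V] {r : ℕ} {F F' : Finset (Finset V)}
    (h : F ⊆ F') (u v : V) : CSet r F u v ⊆ CSet r F' u v := by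
  intro i hi
  obtain ⟨S, hS, h1, h2⟩ := hi
  exact ⟨S, hS.trans h, h1, h2⟩

lemma tl_mergeable_lift {V : Type*} [DecidableEq V] {r : ℕ} {A B : Set ℕ}
    {a U b : Finset (Finset V)} (hsub : a ⊆ U) (hd : Disjoint U b)
    (hm : Mergeable r A B a b) : Mergeable r A B U b := by
  rcases hm with ⟨_, u, v, huv, hA, hB⟩ | ⟨_, u, v, huv, hA, hB⟩
  · exact Or.inl ⟨hd, u, v, huv, hA.trans (tl_cset_mono hsub u v), hB⟩
  · exact Or.inr ⟨hd.symm, u, v, huv, hA, hB.trans (tl_cset_mono hsub u v)⟩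

lemma tl_mergeable_symm {V : Type*} [DecidableEq V] {r : ℕ} {A B : Set ℕ}
    {a b : Finset (Finset V)} (hm : Mergeable r A B a b) : Mergeable r A B b a :=
  hm.symm

lemma tl_crossing {α : Type*} {rel : α → α → Prop} {S : Set α} :
    ∀ {p q : α}, Relation.ReflTransGen rel p q → p ∈ S → q ∉ S →
      ∃ a ∈ S, ∃ b, b ∉ S ∧ rel a b := by
  intro p q h
  induction h with
  | refl => intro hp hq; exact absurd hp hq
  | @tail b c hpb hbc ih =>
    intro hp hq
    by_cases hb : b ∈ S
    · exact ⟨b, hb, c, hq, hbc⟩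
    · exact ih hp hb

/-- `F` is "good": nonempty, a union of parts of `P`, and its parts are connected
under mergeability. -/
def TLGood {V : Type*} [DecidableEq V] (r : ℕ) (A B : Set ℕ)
    (P : Finset (Finset (Finset V))) (F : Finset (Finset V)) : Prop :=
  F.Nonempty ∧ (∀ e ∈ F, ∃ p ∈ P, e ∈ p ∧ p ⊆ F) ∧
    ∀ p q, p ∈ P → p ⊆ F → q ∈ P → q ⊆ F →
      Relation.ReflTransGen
        (fun a b => a ∈ P ∧ b ∈ P ∧ a ⊆ F ∧ b ⊆ F ∧ Mergeable r A B a b) p q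

lemma tl_part_sub {V : Type*} [DecidableEq V] {P : Finset (Finset (Finset V))}
    (hPdisj : ∀ p ∈ P, ∀ q ∈ P, p ≠ q → Disjoint p q)
    {F : Finset (Finset V)} (hgood : ∀ e ∈ F, ∃ p ∈ P, e ∈ p ∧ p ⊆ F)
    {p : Finset (Finset V)} (hp : p ∈ P) {e : Finset V} (he : e ∈ p) (heF : e ∈ F) :
    p ⊆ F := by
  obtain ⟨q, hq, heq, hqF⟩ := hgood e heF
  have : p = q := by
    by_contra hne
    exact Finset.disjoint_left.mp (hPdisj p hp q hq hne) he heq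
  exact this ▸ hqF

lemma tl_good_union {V : Type*} [DecidableEq V] {r : ℕ} {A B : Set ℕ}
    {P : Finset (Finset (Finset V))}
    (hPne : ∀ p ∈ P, p.Nonempty) (hPdisj : ∀ p ∈ P, ∀ q ∈ P, p ≠ q → Disjoint p q)
    {F H : Finset (Finset V)} (hGF : TLGood r A B P F) (hGH : TLGood r A B P H)
    (hbridge : ∃ a ∈ P, ∃ b ∈ P, a ⊆ F ∧ b ⊆ H ∧ Mergeable r A B a b) :
    TLGood r A B P (F ∪ H) := by
  obtain ⟨hFne, hFpart, hFconn⟩ := hGF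
  obtain ⟨hHne, hHpart, hHconn⟩ := hGH
  obtain ⟨a, ha, b, hb, haF, hbH, hab⟩ := hbridge
  have hclass : ∀ p ∈ P, p ⊆ F ∪ H → p ⊆ F ∨ p ⊆ H := by
    intro p hp hpFH
    obtain ⟨e, he⟩ := hPne p hp
    rcases Finset.mem_union.mp (hpFH he) with h | h
    · exact Or.inl (tl_part_sub hPdisj hFpart hp he h)
    · exact Or.inr (tl_part_sub hPdisj hHpart hp he h)
  refine ⟨?_, ?_, ?_⟩
  · obtain ⟨e, he⟩ := hFne
    exact ⟨e, Finset.mem_union_left _ he⟩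
  · intro e he
    rcases Finset.mem_union.mp he with h | h
    · obtain ⟨p, hp, hep, hpF⟩ := hFpart e h
      exact ⟨p, hp, hep, hpF.trans Finset.subset_union_left⟩
    · obtain ⟨p, hp, hep, hpH⟩ := hHpart e h
      exact ⟨p, hp, hep, hpH.trans Finset.subset_union_right⟩
  · intro p q hp hpU hq hqU
    set relU := fun x y => x ∈ P ∧ y ∈ P ∧ x ⊆ F ∪ H ∧ y ⊆ F ∪ H ∧ Mergeable r A B x y
      with hrelU
    have hmonoF : ∀ {x y : Finset (Finset V)}, x ∈ P → x ⊆ F → y ∈ P → y ⊆ F →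
        Relation.ReflTransGen relU x y := by
      intro x y hx hxF hy hyF
      refine Relation.ReflTransGen.mono ?_ x y (hFconn x y hx hxF hy hyF)
      rintro c d ⟨h1, h2, h3, h4, h5⟩
      exact ⟨h1, h2, h3.trans Finset.subset_union_left,
        h4.trans Finset.subset_union_left, h5⟩
    have hmonoH : ∀ {x y : Finset (Finset V)}, x ∈ P → x ⊆ H → y ∈ P → y ⊆ H →
        Relation.ReflTransGen relU x y := by
      intro x y hx hxH hy hyH
      refine Relation.ReflTransGen.mono ?_ x y (hHconn x y hx hxH hy hyH)
      rintro c d ⟨h1, h2, h3, h4, h5⟩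
      exact ⟨h1, h2, h3.trans Finset.subset_union_right,
        h4.trans Finset.subset_union_right, h5⟩
    have hab' : relU a b :=
      ⟨ha, hb, haF.trans Finset.subset_union_left,
        hbH.trans Finset.subset_union_right, hab⟩
    have hba' : relU b a :=
      ⟨hb, ha, hbH.trans Finset.subset_union_right,
        haF.trans Finset.subset_union_left, hab.symm⟩
    rcases hclass p hp hpU with hpF | hpH <;> rcases hclass q hq hqU with hqF | hqH
    · exact hmonoF hp hpF hq hqF
    · exact ((hmonoF hp hpF ha haF).trans (Relation.ReflTransGen.single hab')).trans
        (hmonoH hb hbH hq hqH)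
    · exact ((hmonoH hp hpH hb hbH).trans (Relation.ReflTransGen.single hba')).trans
        (hmonoF ha haF hq hqF)
    · exact hmonoH hp hpH hq hqH

lemma tl_aux {V : Type*} [DecidableEq V] {r : ℕ} {A B : Set ℕ}
    {P : Finset (Finset (Finset V))}
    (hPdisj : ∀ p ∈ P, ∀ q ∈ P, p ≠ q → Disjoint p q)
    {F F₀ : Finset (Finset V)} (hGF : TLGood r A B P F) (hGF₀ : TLGood r A B P F₀)
    (hsub : F₀ ⊆ F) :
    ∀ n (S : Finset (Finset (Finset V))),
      P.filter (· ⊆ F₀) ⊆ S → S ⊆ P.filter (· ⊆ F) →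
      (P.filter (· ⊆ F) \ S).card = n →
      ∃ L : List (Finset (Finset V)), L.Nodup ∧ L.toFinset = P.filter (· ⊆ F) \ S ∧
        ∀ i (h : i < L.length),
          Mergeable r A B (F₀ ∪ (S ∪ (L.take i).toFinset).biUnion id) L[i] := by
  intro n
  induction n with
  | zero =>
    intro S h1 h2 h3
    refine ⟨[], List.nodup_nil, ?_, ?_⟩
    · simp [Finset.card_eq_zero.mp h3]
    · intro i h; simp at h
  | succ n ih =>
    intro S hS1 hS2 hS3
    have hne : (P.filter (· ⊆ F) \ S).Nonempty := by
      rw [← Finset.card_pos, hS3]; omega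
    obtain ⟨q0, hq0⟩ := hne
    obtain ⟨e0, he0⟩ := hGF₀.1
    obtain ⟨p0, hp0P, hep0, hp0F₀⟩ := hGF₀.2.1 e0 he0
    have hp0S : p0 ∈ S := hS1 (Finset.mem_filter.mpr ⟨hp0P, hp0F₀⟩)
    have hq0' := Finset.mem_sdiff.mp hq0
    have hq0F := Finset.mem_filter.mp hq0'.1
    have hpath := hGF.2.2 p0 q0 hp0P (hp0F₀.trans hsub) hq0F.1 hq0F.2
    obtain ⟨a, haS, b, hbS, ha, hb, haf, hbf, hab⟩ :=
      tl_crossing (S := {x | x ∈ S}) hpath hp0S hq0'.2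
    have hbmem : b ∈ P.filter (· ⊆ F) \ S :=
      Finset.mem_sdiff.mpr ⟨Finset.mem_filter.mpr ⟨hb, hbf⟩, hbS⟩
    have hbdisj : ∀ c ∈ S, Disjoint c b := by
      intro c hc
      refine hPdisj c (Finset.mem_filter.mp (hS2 hc)).1 b hb ?_
      rintro rfl; exact hbS hc
    have hdF₀ : Disjoint F₀ b := by
      rw [Finset.disjoint_left]
      intro e heF₀ heb
      obtain ⟨p, hpP, hep, hpF₀⟩ := hGF₀.2.1 e heF₀
      have hpS : p ∈ S := hS1 (Finset.mem_filter.mpr ⟨hpP, hpF₀⟩)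
      exact Finset.disjoint_left.mp (hbdisj p hpS) hep heb
    have hdis : Disjoint (F₀ ∪ S.biUnion id) b := by
      rw [Finset.disjoint_union_left]
      refine ⟨hdF₀, ?_⟩
      rw [Finset.disjoint_left]
      intro e he heb
      obtain ⟨c, hc, hec⟩ := Finset.mem_biUnion.mp he
      exact Finset.disjoint_left.mp (hbdisj c hc) hec heb
    have hsubU : a ⊆ F₀ ∪ S.biUnion id :=
      (Finset.subset_biUnion_of_mem id haS).trans Finset.subset_union_right
    have hmrg : Mergeable r A B (F₀ ∪ S.biUnion id) b :=
      tl_mergeable_lift hsubU hdis hab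
    have hcard : (P.filter (· ⊆ F) \ insert b S).card = n := by
      rw [Finset.sdiff_insert, Finset.card_erase_of_mem hbmem, hS3]
      omega
    obtain ⟨L', hnd', htf', hch'⟩ := ih (insert b S)
      (hS1.trans (Finset.subset_insert _ _))
      (Finset.insert_subset_iff.mpr ⟨Finset.mem_filter.mpr ⟨hb, hbf⟩, hS2⟩) hcard
    refine ⟨b :: L', ?_, ?_, ?_⟩
    · rw [List.nodup_cons]
      refine ⟨fun hmem => ?_, hnd'⟩
      have : b ∈ P.filter (· ⊆ F) \ insert b S := htf' ▸ List.mem_toFinset.mpr hmem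
      exact (Finset.mem_sdiff.mp this).2 (Finset.mem_insert_self _ _)
    · rw [List.toFinset_cons, htf', Finset.sdiff_insert, Finset.insert_erase hbmem]
    · intro i h
      match i with
      | 0 =>
        simpa using hmrg
      | (i + 1) =>
        have h' : i < L'.length := by
          simpa using Nat.lt_of_succ_lt_succ h
        have hstep := hch' i h'
        have hset : S ∪ ((b :: L').take (i + 1)).toFinset
            = insert b S ∪ (L'.take i).toFinset := by
          rw [List.take_succ_cons, List.toFinset_cons, Finset.union_insert,
            Finset.insert_union]
        simpa [hset] using hstep

/-- The Trimming Lemma. -/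
theorem trimming_lemma {V : Type*} [DecidableEq V] (r : ℕ)
    (G : Finset (Finset V)) (hG : IsRGraph r G)
    (P : Finset (Finset (Finset V))) (A B : Set ℕ)
    -- `P` is a partition of the edge set of `G`:
    (hPsub : ∀ p ∈ P, p ⊆ G)
    (hPne : ∀ p ∈ P, p.Nonempty)
    (hPdisj : ∀ p ∈ P, ∀ q ∈ P, p ≠ q → Disjoint p q)
    (hPcover : ∀ e ∈ G, ∃ p ∈ P, e ∈ p)
    -- `M'` is the smallest family containing `P` and closed under unions of
    -- edge-disjoint `A⋈B`-mergeable members: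
    (M' : Set (Finset (Finset V)))
    (hPM : ∀ p ∈ P, p ∈ M')
    (hClosed : ∀ F ∈ M', ∀ H ∈ M', Disjoint F H → Mergeable r A B F H → F ∪ H ∈ M')
    (hMin : ∀ N : Set (Finset (Finset V)), (∀ p ∈ P, p ∈ N) →
      (∀ F ∈ N, ∀ H ∈ N, Disjoint F H → Mergeable r A B F H → F ∪ H ∈ N) →
      M' ⊆ N)
    -- the trimming hypothesis:
    (hTrim : ∀ F ∈ M', ∀ H ∈ M', OMergeable r A B F H →
      ∃ F' ∈ P, ∃ H' ∈ P, F' ⊆ F ∧ H' ⊆ H ∧ OMergeable r A B F' H')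
    (F₀ F : Finset (Finset V)) (hF₀ : F₀ ∈ M') (hF : F ∈ M') (hsub : F₀ ⊆ F) :
    ∃ (s : ℕ) (g : Fin s → Finset (Finset V)),
      Function.Injective g ∧
      (∀ i, g i ∈ P ∧ g i ⊆ F ∧ Disjoint (g i) F₀) ∧
      (∀ p ∈ P, p ⊆ F → Disjoint p F₀ → ∃ i, g i = p) ∧
      ∀ i : Fin s,
        Mergeable r A B (F₀ ∪ (Finset.univ.filter fun j => j < i).biUnion g) (g i) := by
  classical
  -- every member of `M'` is good
  have hAllGood : ∀ X ∈ M', TLGood r A B P X := by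
    intro X hX
    refine (hMin {Y | Y ∈ M' ∧ TLGood r A B P Y} ?_ ?_ hX).2
    · intro p hp
      refine ⟨hPM p hp, hPne p hp, fun e he => ⟨p, hp, he, subset_rfl⟩, ?_⟩
      intro p' q' hp' hp'sub hq' hq'sub
      have hpeq : ∀ x ∈ P, x ⊆ p → x = p := by
        intro x hx hxp
        by_contra hne
        obtain ⟨e, he⟩ := hPne x hx
        exact Finset.disjoint_left.mp (hPdisj x hx p hp hne) he (hxp he)
      rw [hpeq p' hp' hp'sub, hpeq q' hq' hq'sub]
    · rintro X ⟨hXM, hXG⟩ Y ⟨hYM, hYG⟩ hd hm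
      refine ⟨hClosed X hXM Y hYM hd hm, tl_good_union hPne hPdisj hXG hYG ?_⟩
      rcases hm with hFH | hHF
      · obtain ⟨F', hF', H', hH', hF'X, hH'Y, hO⟩ := hTrim X hXM Y hYM hFH
        exact ⟨F', hF', H', hH', hF'X, hH'Y, Or.inl hO⟩
      · obtain ⟨H', hH', F', hF', hH'Y, hF'X, hO⟩ := hTrim Y hYM X hXM hHF
        exact ⟨F', hF', H', hH', hF'X, hH'Y, Or.inr hO⟩
  have hGF := hAllGood F hF
  have hGF₀ := hAllGood F₀ hF₀
  -- the set of parts of `F` avoiding `F₀`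
  have hmemD : ∀ p, p ∈ P.filter (· ⊆ F) \ P.filter (· ⊆ F₀) ↔
      p ∈ P ∧ p ⊆ F ∧ Disjoint p F₀ := by
    intro p
    constructor
    · intro hp
      obtain ⟨hp1, hp2⟩ := Finset.mem_sdiff.mp hp
      obtain ⟨hpP, hpF⟩ := Finset.mem_filter.mp hp1
      refine ⟨hpP, hpF, ?_⟩
      rw [Finset.disjoint_left]
      intro e hep heF₀
      obtain ⟨q, hqP, heq, hqF₀⟩ := hGF₀.2.1 e heF₀
      have : p = q := by
        by_contra hne
        exact Finset.disjoint_left.mp (hPdisj p hpP q hqP hne) hep heq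
      exact hp2 (Finset.mem_filter.mpr ⟨hpP, this ▸ hqF₀⟩)
    · rintro ⟨hpP, hpF, hpd⟩
      refine Finset.mem_sdiff.mpr ⟨Finset.mem_filter.mpr ⟨hpP, hpF⟩, fun hc => ?_⟩
      obtain ⟨e, he⟩ := hPne p hpP
      exact Finset.disjoint_left.mp hpd he ((Finset.mem_filter.mp hc).2 he)
  obtain ⟨L, hnd, htf, hch⟩ := tl_aux hPdisj hGF hGF₀ hsub
    (P.filter (· ⊆ F) \ P.filter (· ⊆ F₀)).card (P.filter (· ⊆ F₀))
    subset_rfl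
    (fun p hp => Finset.mem_filter.mpr
      ⟨(Finset.mem_filter.mp hp).1, (Finset.mem_filter.mp hp).2.trans hsub⟩) rfl
  have e1 : (P.filter (· ⊆ F₀)).biUnion id ⊆ F₀ := by
    intro e he
    obtain ⟨p, hp, hep⟩ := Finset.mem_biUnion.mp he
    exact (Finset.mem_filter.mp hp).2 hep
  refine ⟨L.length, L.get, List.nodup_iff_injective_get.mp hnd, ?_, ?_, ?_⟩
  · intro i
    have hmem : L.get i ∈ L.toFinset := List.mem_toFinset.mpr (L.get_mem i)
    rw [htf] at hmem
    exact (hmemD _).mp hmem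
  · intro p hpP hpF hpd
    have hmem : p ∈ L.toFinset := by rw [htf]; exact (hmemD p).mpr ⟨hpP, hpF, hpd⟩
    exact List.mem_iff_get.mp (List.mem_toFinset.mp hmem)
  · intro i
    have hstep := hch i.1 i.2
    have e2 : (Finset.univ.filter fun j => j < i).biUnion L.get
        = (L.take i.1).toFinset.biUnion id := by
      ext e
      simp only [Finset.mem_biUnion, Finset.mem_filter, Finset.mem_univ, true_and,
        List.mem_toFinset, id_eq]
      constructor
      · rintro ⟨j, hj, hej⟩
        refine ⟨L.get j, ?_, hej⟩
        have hj' : (j : ℕ) < (L.take i.1).length := by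
          rw [List.length_take]
          exact lt_min (Fin.lt_def.mp hj) j.2
        have hmem := List.getElem_mem (l := L.take i.1) hj'
        rwa [List.getElem_take, ← List.get_eq_getElem] at hmem
      · rintro ⟨p, hp, hep⟩
        obtain ⟨k, hk, hkp⟩ := List.getElem_of_mem hp
        rw [List.length_take] at hk
        have hkL : k < L.length := lt_of_lt_of_le hk (min_le_right _ _)
        refine ⟨⟨k, hkL⟩, ?_, ?_⟩
        · exact Fin.lt_def.mpr (lt_of_lt_of_le hk (min_le_left _ _))
        · rw [List.get_eq_getElem]
          rw [List.getElem_take] at hkp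
          rw [hkp]; exact hep
    have hbi : F₀ ∪ (P.filter (· ⊆ F₀) ∪ (L.take i.1).toFinset).biUnion id
        = F₀ ∪ (Finset.univ.filter fun j => j < i).biUnion L.get := by
      rw [e2]
      ext e
      simp only [Finset.mem_union, Finset.mem_biUnion]
      constructor
      · rintro (he | ⟨p, hp, hep⟩)
        · exact Or.inl he
        · rcases hp with h | h
          · exact Or.inl (e1 (Finset.mem_biUnion.mpr ⟨p, h, hep⟩))
          · exact Or.inr ⟨p, h, hep⟩
      · rintro (he | ⟨p, hp, hep⟩)
        · exact Or.inl he
        · exact Or.inr ⟨p, Or.inr hp, hep⟩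
    rw [← hbi]
    simpa [List.get_eq_getElem] using hstep
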